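/- Let C1 and C2 be linear codes of length n over F_q with dimensions k1, k2, such that dim(C1 ∩ C2) = ℓ and C1 + C2 = F_q^n. Then for any generator matrix G1 of C1 and parity-check matrix H2 of C2, rank(G1 · H2^t) = n − k2 = k1 − ℓ. -/

import Mathlib

open Matrix

variable {F : Type*} [Field F] [Fintype F]

/-- The Euclidean dual of a linear code `C ⊆ F^n`. -/
def dualCode {n : ℕ} (C : Submodule F (Fin n → F)) : Submodule F (Fin n → F) where
  carrier := {u | ∀ c ∈ C, dotProduct u c = 0}
  add_mem' := by
    intro a b ha hb c hc
    simp [add_dotProduct, ha c hc, hb c hc]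
  zero_mem' := by
    intro c hc
    simp
  smul_mem' := by
    intro r a ha c hc
    simp [smul_dotProduct, ha c hc]

/-- `G` is a generator matrix of the code `C`: its rows form a basis of `C`. -/
def IsGenMat {n k : ℕ} (C : Submodule F (Fin n → F)) (G : Matrix (Fin k) (Fin n) F) : Prop :=
  LinearIndependent F (fun i => G i) ∧ Submodule.span F (Set.range fun i => G i) = C

lemma mem_dualCode {n : ℕ} {C : Submodule F (Fin n → F)} {u : Fin n → F} :
    u ∈ dualCode C ↔ ∀ c ∈ C, dotProduct u c = 0 := Iff.rfl

lemma dualCode_span {n : ℕ} (s : Set (Fin n → F)) {u : Fin n → F}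
    (h : ∀ x ∈ s, dotProduct u x = 0) :
    u ∈ dualCode (Submodule.span F s) := by
  intro c hc
  induction hc using Submodule.span_induction with
  | mem x hx => exact h x hx
  | zero => simp
  | add x y _ _ hx hy => simp [dotProduct_add, hx, hy]
  | smul r x _ hx => simp [dotProduct_smul, hx]

lemma dotProduct_eq_zero_of_forall {n : ℕ} {u : Fin n → F}
    (h : ∀ c : Fin n → F, dotProduct u c = 0) : u = 0 := by
  funext i
  simpa using h (Pi.single i 1)

/-- dimension of the dual code -/
lemma finrank_dualCode {n : ℕ} (C : Submodule F (Fin n → F)) :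
    Module.finrank F (dualCode C) = n - Module.finrank F C := by
  classical
  set k := Module.finrank F C with hk
  let b : Module.Basis (Fin k) F C := Module.finBasis F C
  let G2 : Matrix (Fin k) (Fin n) F := fun i => (b i : Fin n → F)
  have hspan : Submodule.span F (Set.range fun i => G2 i) = C := by
    have h := b.span_eq
    apply_fun Submodule.map C.subtype at h
    rwa [Submodule.map_span, Submodule.map_subtype_top, ← Set.range_comp] at h
  have hdc : dualCode C = LinearMap.ker G2.mulVecLin := by
    ext u
    constructor
    · intro hu
      rw [LinearMap.mem_ker]
      funext i
      have := hu (G2 i) (by rw [← hspan]; exact Submodule.subset_span ⟨i, rfl⟩)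
      simpa [Matrix.mulVec, dotProduct_comm] using this
    · intro hu
      rw [LinearMap.mem_ker] at hu
      rw [← hspan]
      apply dualCode_span
      intro x hx
      obtain ⟨i, rfl⟩ := hx
      have := congrFun hu i
      simpa [Matrix.mulVec, dotProduct_comm] using this
  have hrk : G2.rank = k := by
    rw [Matrix.rank_eq_finrank_span_row]
    rw [show (Set.range G2.row) = (Set.range fun i => G2 i) from rfl, hspan, hk]
  have hrn := LinearMap.finrank_range_add_finrank_ker G2.mulVecLin
  rw [Module.finrank_fin_fun] at hrn
  have : G2.rank + Module.finrank F (LinearMap.ker G2.mulVecLin) = n := hrn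
  rw [hdc]
  omega

theorem rank_of_intersection_pair_sum_full {n k1 k2 ℓ m2 : ℕ}
    (C1 C2 : Submodule F (Fin n → F))
    (hk1 : Module.finrank F C1 = k1) (hk2 : Module.finrank F C2 = k2)
    (hl : Module.finrank F ↥(C1 ⊓ C2) = ℓ) (hsum : C1 ⊔ C2 = ⊤)
    (G1 : Matrix (Fin k1) (Fin n) F) (hG1 : IsGenMat C1 G1)
    (H2 : Matrix (Fin m2) (Fin n) F) (hH2 : IsGenMat (dualCode C2) H2) :
    (G1 * H2.transpose).rank = n - k2 ∧ n - k2 = k1 - ℓ := by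
  classical
  have hk2n : k2 ≤ n := by
    have h := Submodule.finrank_le C2
    rwa [hk2, Module.finrank_fin_fun] at h
  have hlk1 : ℓ ≤ k1 := by
    rw [← hl, ← hk1]
    exact Submodule.finrank_mono inf_le_left
  have hdim : k1 + k2 = n + ℓ := by
    have h := Submodule.finrank_sup_add_finrank_inf_eq C1 C2
    rw [hsum, hk1, hk2, hl] at h
    rw [← h, finrank_top, Module.finrank_fin_fun]
  have h2 : n - k2 = k1 - ℓ := by omega
  refine ⟨?_, h2⟩
  -- rank computation
  have hrng : LinearMap.range (H2.transpose.mulVecLin) = dualCode C2 := by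
    rw [Matrix.range_mulVecLin]
    exact hH2.2
  have hcomp : (G1 * H2.transpose).mulVecLin = G1.mulVecLin.comp H2.transpose.mulVecLin :=
    Matrix.mulVecLin_mul _ _
  have hrank : (G1 * H2.transpose).rank
      = Module.finrank F (Submodule.map G1.mulVecLin (dualCode C2)) := by
    rw [Matrix.rank, hcomp, LinearMap.range_comp, hrng]
  -- the restriction of mulVecLin G1 to dualCode C2 is injective
  have hker : LinearMap.ker (G1.mulVecLin.domRestrict (dualCode C2)) = ⊥ := by
    rw [LinearMap.ker_domRestrict, Submodule.eq_bot_iff]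
    intro u hu
    rw [Submodule.mem_comap, LinearMap.mem_ker] at hu
    have hu2 := u.2
    have hu1 : G1.mulVecLin ↑u = 0 := hu
    apply Subtype.ext
    show (u : Fin n → F) = 0
    have hu1' : (u : Fin n → F) ∈ dualCode C1 := by
      rw [← hG1.2]
      apply dualCode_span
      intro x hx
      obtain ⟨i, rfl⟩ := hx
      have := congrFun hu1 i
      simpa [Matrix.mulVec, dotProduct_comm] using this
    have : (u : Fin n → F) ∈ dualCode ⊤ := by
      rw [← hsum]
      intro c hc
      obtain ⟨a, ha, b, hb, rfl⟩ := Submodule.mem_sup.mp hc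
      simp [dotProduct_add, hu1' a ha, hu2 b hb]
    exact dotProduct_eq_zero_of_forall fun c => this c trivial
  have hfin : Module.finrank F (Submodule.map G1.mulVecLin (dualCode C2))
      = Module.finrank F (dualCode C2) := by
    have h := LinearMap.finrank_range_add_finrank_ker (G1.mulVecLin.domRestrict (dualCode C2))
    rw [hker, finrank_bot, add_zero, LinearMap.range_domRestrict] at h
    exact h
  rw [hrank, hfin, finrank_dualCode, hk2]
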